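/- Let p: ℝ^n → ℝ be a multilinear polynomial. Then there exists a univariate polynomial q: ℝ → ℝ with deg q ≤ deg p such that for every x ∈ {0,1}^n, (1/n!)·∑_{π ∈ S_n} p(x_{π(1)}, ..., x_{π(n)}) = q(x_1 + x_2 + ... + x_n), where S_n is the group of permutations of {1,...,n}. -/

import Mathlib

noncomputable section

/-- Interpret a Boolean value as a real number (true ↦ 1, false ↦ 0). -/
def boolToReal (b : Bool) : ℝ := if b then 1 else 0

open Finset Equiv


theorem fixD (α : Type*) [Fintype α] [DecidableEq α] (S : Finset α) :
    (univ.filter (fun σ : Perm α => ∀ i ∈ S, σ i = i)).card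
      = (Fintype.card α - S.card).factorial := by
  rw [← Fintype.card_subtype]
  have e : {σ : Perm α // ∀ i ∈ S, σ i = i} ≃ Perm {i : α // i ∉ S} := by
    refine (Equiv.subtypeEquiv (Equiv.refl _) ?_).trans
      (Equiv.Perm.subtypeEquivSubtypePerm (fun a => a ∉ S)).symm
    intro σ; simp [not_not]
  rw [Fintype.card_congr e, Fintype.card_perm, Fintype.card_subtype_compl,
    Fintype.card_coe]

theorem extC (α : Type*) [Fintype α] [DecidableEq α] (S : Finset α) (f : α → α)
    (hf : Set.InjOn f S) :
    (univ.filter (fun π : Perm α => ∀ i ∈ S, π i = f i)).card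
      = (Fintype.card α - S.card).factorial := by
  -- construct π₀ extending f on S
  have hbij : Function.Bijective (fun i : {i : α // i ∈ S} =>
      (⟨f i.1, Finset.mem_image_of_mem f i.2⟩ : {a : α // a ∈ S.image f})) := by
    constructor
    · rintro ⟨a, ha⟩ ⟨b, hb⟩ h
      simpa [Subtype.ext_iff] using hf ha hb (by simpa [Subtype.ext_iff] using h)
    · rintro ⟨b, hb⟩
      obtain ⟨a, ha, rfl⟩ := Finset.mem_image.mp hb
      exact ⟨⟨a, ha⟩, rfl⟩
  set e := Equiv.ofBijective _ hbij
  set π₀ : Perm α := e.extendSubtype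
  have hπ₀ : ∀ i ∈ S, π₀ i = f i := by
    intro i hi
    have := e.extendSubtype_apply_of_mem i hi
    simpa [π₀, e, Equiv.ofBijective] using this
  -- bijection with pointwise stabilizer
  rw [← fixD α S]
  apply Finset.card_bij (fun π _ => π₀⁻¹ * π)
  · intro π hπ
    simp only [mem_filter, mem_univ, true_and] at hπ ⊢
    intro i hi
    rw [Perm.mul_apply, hπ i hi, ← hπ₀ i hi, Perm.inv_def, Equiv.symm_apply_apply]
  · intro a ha b hb h
    exact mul_left_cancel h
  · intro σ hσ
    simp only [mem_filter, mem_univ, true_and] at hσ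
    refine ⟨π₀ * σ, ?_, by group⟩
    simp only [mem_filter, mem_univ, true_and]
    intro i hi
    rw [Perm.mul_apply, hσ i hi, hπ₀ i hi]

theorem countB (α : Type*) [Fintype α] [DecidableEq α] (S : Finset α) (x : α → Bool) :
    (univ.filter (fun π : Perm α => ∀ i ∈ S, x (π i) = true)).card
      = ((univ.filter (fun a => x a = true)).card).descFactorial S.card
        * (Fintype.card α - S.card).factorial := by
  classical
  set B : Finset ({i : α // i ∈ S} → α) :=
    univ.filter (fun g => Function.Injective g ∧ ∀ i, x (g i) = true) with hB
  rw [Finset.card_eq_sum_card_fiberwise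
      (f := fun π : Perm α => fun i : {i : α // i ∈ S} => π i.1) (t := B) ?_]
  · have hfib : ∀ g ∈ B,
        ((univ.filter (fun π : Perm α => ∀ i ∈ S, x (π i) = true)).filter
          (fun π => (fun i : {i : α // i ∈ S} => π i.1) = g)).card
        = (Fintype.card α - S.card).factorial := by
      intro g hg
      simp only [hB, mem_filter, mem_univ, true_and] at hg
      rw [Finset.filter_filter]
      have : ∀ π : Perm α,
          ((∀ i ∈ S, x (π i) = true) ∧ (fun i : {i : α // i ∈ S} => π i.1) = g)
          ↔ ∀ i ∈ S, π i = (fun a => if h : a ∈ S then g ⟨a, h⟩ else a) i := by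
        intro π
        constructor
        · rintro ⟨-, h2⟩ i hi
          simp only [dif_pos hi]
          exact congrFun h2 ⟨i, hi⟩
        · intro h
          constructor
          · intro i hi
            rw [h i hi]; simp only [dif_pos hi]; exact hg.2 ⟨i, hi⟩
          · funext i
            have := h i.1 i.2
            simpa [dif_pos i.2] using this
      rw [Finset.filter_congr (fun π _ => this π)]
      apply extC
      intro a ha b hb hab
      simp only [Finset.mem_coe] at ha hb
      simp only [dif_pos ha, dif_pos hb] at hab
      have := hg.1 hab
      exact Subtype.ext_iff.mp this
    rw [Finset.sum_congr rfl hfib, Finset.sum_const, smul_eq_mul]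
    congr 1
    -- B.card = descFactorial
    rw [← Fintype.card_coe B]
    have e : {g // g ∈ B} ≃ ({i : α // i ∈ S} ↪ {a : α // x a = true}) := by
      refine ⟨fun g => ⟨fun i => ⟨g.1 i, ?_⟩, fun a b h => ?_⟩,
        fun e => ⟨fun i => (e i).1, ?_⟩, fun g => rfl, fun e => rfl⟩
      · have := g.2; simp only [hB, mem_filter, mem_univ, true_and] at this
        exact this.2 i
      · have := g.2; simp only [hB, mem_filter, mem_univ, true_and] at this
        exact this.1 (Subtype.ext_iff.mp h)
      · simp only [hB, mem_filter, mem_univ, true_and]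
        exact ⟨fun a b h => e.injective (Subtype.ext h), fun i => (e i).2⟩
    rw [Fintype.card_congr e, Fintype.card_embedding_eq, Fintype.card_coe,
      Fintype.card_subtype]
  · intro π hπ
    simp only [mem_filter, mem_univ, true_and] at hπ ⊢
    simp only [hB, mem_filter, mem_univ, true_and]
    exact Finset.mem_filter.mpr ⟨Finset.mem_univ _, fun a b h => Subtype.ext (π.injective h), fun i => (Finset.mem_filter.mp (Finset.mem_coe.mp hπ)).2 i.1 i.2⟩


theorem sumE (n : ℕ) (S : Finset (Fin n)) (x : Fin n → Bool)
    (hc : (univ.filter (fun π : Perm (Fin n) => ∀ i ∈ S, x (π i) = true)).card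
      = ((univ.filter (fun a => x a = true)).card).descFactorial S.card
        * (n - S.card).factorial) :
    ∑ π : Perm (Fin n), ∏ i ∈ S, boolToReal (x (π i))
      = (((univ.filter (fun a => x a = true)).card).descFactorial S.card
        * (n - S.card).factorial : ℝ) := by
  have h1 : ∀ π : Perm (Fin n), ∏ i ∈ S, boolToReal (x (π i))
      = if ∀ i ∈ S, x (π i) = true then (1 : ℝ) else 0 := by
    intro π
    calc ∏ i ∈ S, boolToReal (x (π i))
        = ∏ i ∈ S, if x (π i) = true then (1:ℝ) else 0 :=
          Finset.prod_congr rfl fun i _ => by simp [boolToReal]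
      _ = _ := by rw [Finset.prod_boole]; convert rfl
  simp only [h1]
  rw [Finset.sum_boole, hc]
  push_cast
  ring

/-- Symmetrization lemma: if `p` is a multilinear real polynomial in `n` variables, then
there is a univariate polynomial `q` with `deg q ≤ deg p` such that for every
`x ∈ {0,1}^n`, the average of `p` over all permutations of the coordinates of `x`
equals `q(x₁ + ⋯ + xₙ)`. -/
theorem symmetrization_lemma (n : ℕ) (p : MvPolynomial (Fin n) ℝ)
    (hml : ∀ i, p.degreeOf i ≤ 1) :
    ∃ q : Polynomial ℝ, q.natDegree ≤ p.totalDegree ∧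
      ∀ x : Fin n → Bool,
        (1 / (n.factorial : ℝ)) *
            ∑ π : Equiv.Perm (Fin n),
              MvPolynomial.eval (fun i => boolToReal (x (π i))) p
          = q.eval (∑ i, boolToReal (x i)) := by
  classical
  refine ⟨∑ m ∈ p.support, Polynomial.C
      (p.coeff m * ((n - m.support.card).factorial : ℝ) / (n.factorial : ℝ))
      * descPochhammer ℝ m.support.card, ?_, ?_⟩
  · -- degree bound
    apply Polynomial.natDegree_sum_le_of_forall_le
    intro m hm
    refine le_trans (Polynomial.natDegree_C_mul_le _ _) ?_
    rw [descPochhammer_natDegree]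
    -- m.support.card ≤ totalDegree
    refine le_trans ?_ (MvPolynomial.le_totalDegree hm)
    rw [Finsupp.sum]
    exact le_trans (by simp) (Finset.card_nsmul_le_sum m.support (fun i => m i) 1
      (fun i hi => Nat.one_le_iff_ne_zero.mpr (Finsupp.mem_support_iff.mp hi)))
  · intro x
    set k : ℕ := (univ.filter (fun a => x a = true)).card with hk
    -- exponents are one on support
    have hexp : ∀ m ∈ p.support, ∀ i ∈ m.support, m i = 1 := by
      intro m hm i hi
      have h1 : m i ≤ 1 := le_trans
        (le_trans (Finset.le_sup (f := fun m => m i) hm) (le_of_eq (MvPolynomial.degreeOf_eq_sup i p).symm))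
        (hml i)
      have h0 : m i ≠ 0 := Finsupp.mem_support_iff.mp hi
      omega
    have heval : ∀ π : Perm (Fin n),
        MvPolynomial.eval (fun i => boolToReal (x (π i))) p
        = ∑ m ∈ p.support, p.coeff m * ∏ i ∈ m.support, boolToReal (x (π i)) := by
      intro π
      rw [MvPolynomial.eval_eq]
      refine Finset.sum_congr rfl fun m hm => ?_
      congr 1
      refine Finset.prod_congr rfl fun i hi => ?_
      rw [hexp m hm i hi, pow_one]
    have hsum : ∑ i, boolToReal (x i) = (k : ℝ) := by
      rw [hk, ← Finset.sum_boole]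
      exact Finset.sum_congr rfl fun i _ => by simp [boolToReal]
    rw [hsum]
    simp only [heval]
    rw [Finset.sum_comm]
    rw [Polynomial.eval_finset_sum]
    rw [Finset.mul_sum]
    refine Finset.sum_congr rfl fun m hm => ?_
    rw [← Finset.mul_sum, sumE n m.support x (by simpa using countB (Fin n) m.support x)]
    rw [Polynomial.eval_mul, Polynomial.eval_C,
      descPochhammer_eval_eq_descFactorial]
    have hfac : (n.factorial : ℝ) ≠ 0 := Nat.cast_ne_zero.mpr n.factorial_ne_zero
    field_simp
    ring
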